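/- With the hypotheses of the previous statement (f_t Möbius conjugate to polynomials for all t ∈ D*, f_t → φ locally uniformly on P^1 \ {h} with deg φ = d − 1 > 0, and p_t → h where p_t is the totally ramified fixed point of f_t), the limit map φ satisfies φ^{-1}(h) = {h}. -/

import Mathlib

open Filter Topology Polynomial

/-- The chordal distance between the points `[v₁ : v₂]` and `[w₁ : w₂]` of `ℙ¹`, written in
homogeneous coordinates: `[v, w] = |v₁w₂ − v₂w₁| / (‖v‖‖w‖)`. -/
noncomputable def chordalP1 (v w : ℂ × ℂ) : ℝ :=
  ‖v.1 * w.2 - v.2 * w.1‖ /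
    (Real.sqrt (‖v.1‖ ^ 2 + ‖v.2‖ ^ 2) *
      Real.sqrt (‖w.1‖ ^ 2 + ‖w.2‖ ^ 2))

/-- Evaluation at `(z, w)` of the degree-`n` homogenization of a polynomial `P`. -/
noncomputable def homEval (P : Polynomial ℂ) (n : ℕ) (v : ℂ × ℂ) : ℂ :=
  ∑ i ∈ Finset.range (n + 1), P.coeff i * v.1 ^ i * v.2 ^ (n - i)

lemma homEval_eval {P : Polynomial ℂ} {n : ℕ} (hP : P.natDegree ≤ n) (z : ℂ) :
    homEval P n (z, 1) = P.eval z := by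
  rw [homEval, Polynomial.eval_eq_sum_range' (Nat.lt_succ_of_le hP)]
  simp [mul_comm]

lemma homEval_inf (P : Polynomial ℂ) (n : ℕ) (x : ℂ) :
    homEval P n (x, 0) = P.coeff n * x ^ n := by
  rw [homEval, Finset.sum_eq_single n]
  · simp
  · intro i hi hne
    have : n - i ≠ 0 := Nat.sub_ne_zero_of_lt (lt_of_le_of_ne (Nat.lt_succ_iff.mp (Finset.mem_range.mp hi)) hne)
    simp [zero_pow this]
  · intro hn; exact absurd (Finset.self_mem_range_succ n) hn

lemma homEval_scale {P : Polynomial ℂ} {n : ℕ} (hP : P.natDegree ≤ n) (z y : ℂ) :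
    homEval P n (z * y, y) = y ^ n * P.eval z := by
  rw [homEval, Polynomial.eval_eq_sum_range' (Nat.lt_succ_of_le hP), Finset.mul_sum]
  refine Finset.sum_congr rfl fun i hi => ?_
  have hin : i ≤ n := Nat.lt_succ_iff.mp (Finset.mem_range.mp hi)
  rw [mul_pow]
  have : y ^ i * y ^ (n - i) = y ^ n := by
    rw [← pow_add, Nat.add_sub_cancel' hin]
  ring_nf
  rw [mul_assoc, mul_comm (y ^ i), mul_assoc, ← pow_add, Nat.sub_add_cancel hin]
  ring

lemma homEval_sub (P Q : Polynomial ℂ) (n : ℕ) (v : ℂ × ℂ) :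
    homEval (P - Q) n v = homEval P n v - homEval Q n v := by
  rw [homEval, homEval, homEval, ← Finset.sum_sub_distrib]
  refine Finset.sum_congr rfl fun i _ => ?_
  rw [Polynomial.coeff_sub]; ring

lemma homEval_C_mul (a : ℂ) (P : Polynomial ℂ) (n : ℕ) (v : ℂ × ℂ) :
    homEval (C a * P) n v = a * homEval P n v := by
  rw [homEval, homEval, Finset.mul_sum]
  refine Finset.sum_congr rfl fun i _ => ?_
  rw [Polynomial.coeff_C_mul]; ring

lemma homEval_finset_sum {ι : Type*} (s : Finset ι) (f : ι → Polynomial ℂ) (n : ℕ) (v : ℂ × ℂ) :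
    homEval (∑ i ∈ s, f i) n v = ∑ i ∈ s, homEval (f i) n v := by
  simp only [homEval, Polynomial.finset_sum_coeff, Finset.sum_mul]
  exact Finset.sum_comm

lemma homEval_XsubC_pow (a : ℂ) (m : ℕ) (v : ℂ × ℂ) :
    homEval ((X - C a) ^ m) m v = (v.1 - a * v.2) ^ m := by
  have : (X - C a) ^ m = (X + C (-a)) ^ m := by rw [map_neg, sub_eq_add_neg]
  rw [this, homEval]
  have hbin : (v.1 + (-(a * v.2))) ^ m =
      ∑ i ∈ Finset.range (m + 1), v.1 ^ i * (-(a * v.2)) ^ (m - i) * (m.choose i : ℂ) :=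
    Commute.add_pow (Commute.all _ _) m
  have : v.1 - a * v.2 = v.1 + (-(a * v.2)) := by ring
  rw [this, hbin]
  refine Finset.sum_congr rfl fun i _ => ?_
  rw [Polynomial.coeff_X_add_C_pow, neg_mul_eq_neg_mul, neg_pow, neg_pow, mul_pow]
  ring

lemma aux_real {na nb nα nβ N M e : ℝ} (hna0 : 0 ≤ na) (hnb0 : 0 ≤ nb) (hnα0 : 0 ≤ nα)
    (hnβ0 : 0 < nβ) (hNpos : 0 < N) (hMpos : 0 < M) (hNle : N ≤ na + nb) (he0 : 0 ≤ e)
    (hch : e ≤ nβ / (2 * M)) (htri : na * nβ ≤ e * (N * M) + nb * nα) :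
    0 < nb ∧ e * (N * M) * nβ ^ 2 ≤ e * (2 * M * (nα + nβ)) * (nb * nβ) := by
  have heM : e * (N * M) ≤ N * nβ / 2 := by
    have h1 : e * (2 * M) ≤ nβ := (le_div_iff₀ (by positivity)).mp hch
    nlinarith
  have hblb2 : N * nβ ≤ 2 * (nb * (nα + nβ)) := by
    nlinarith [mul_le_mul_of_nonneg_right hNle hnβ0.le]
  have hnbpos : 0 < nb := by nlinarith
  refine ⟨hnbpos, ?_⟩
  nlinarith [mul_le_mul_of_nonneg_left hblb2 (mul_nonneg (mul_nonneg he0 hMpos.le) hnβ0.le)]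

lemma ratio_est {a b α β : ℂ} (hβ : β ≠ 0) (hab : ¬(a = 0 ∧ b = 0))
    (hch : chordalP1 (a, b) (α, β) ≤
      ‖β‖ / (2 * Real.sqrt (‖α‖ ^ 2 + ‖β‖ ^ 2))) :
    b ≠ 0 ∧ ‖a / b - α / β‖ ≤ chordalP1 (a, b) (α, β) *
      (2 * Real.sqrt (‖α‖ ^ 2 + ‖β‖ ^ 2) *
        (‖α‖ + ‖β‖) / ‖β‖ ^ 2) := by
  have hna0 : 0 ≤ ‖a‖ := norm_nonneg a
  have hnb0 : 0 ≤ ‖b‖ := norm_nonneg b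
  have hnα0 : 0 ≤ ‖α‖ := norm_nonneg α
  have hnβ0 : 0 < ‖β‖ := norm_pos_iff.mpr hβ
  have hN2 : Real.sqrt (‖a‖ ^ 2 + ‖b‖ ^ 2) ^ 2
      = ‖a‖ ^ 2 + ‖b‖ ^ 2 := Real.sq_sqrt (by positivity)
  have hMpos : 0 < Real.sqrt (‖α‖ ^ 2 + ‖β‖ ^ 2) :=
    Real.sqrt_pos.mpr (by positivity)
  have hNpos : 0 < Real.sqrt (‖a‖ ^ 2 + ‖b‖ ^ 2) := by
    rcases (not_and_or.mp hab) with ha | hb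
    · exact Real.sqrt_pos.mpr (by nlinarith [norm_pos_iff.mpr ha])
    · exact Real.sqrt_pos.mpr (by nlinarith [norm_pos_iff.mpr hb])
  have heval : chordalP1 (a, b) (α, β) = ‖a * β - b * α‖ /
      (Real.sqrt (‖a‖ ^ 2 + ‖b‖ ^ 2) *
       Real.sqrt (‖α‖ ^ 2 + ‖β‖ ^ 2)) := rfl
  have hkey : ‖a * β - b * α‖ = chordalP1 (a, b) (α, β) *
      (Real.sqrt (‖a‖ ^ 2 + ‖b‖ ^ 2) *
       Real.sqrt (‖α‖ ^ 2 + ‖β‖ ^ 2)) := by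
    rw [heval, div_mul_cancel₀]
    positivity
  have he0 : 0 ≤ chordalP1 (a, b) (α, β) := by rw [heval]; positivity
  have htri : ‖a‖ * ‖β‖ ≤ ‖a * β - b * α‖
      + ‖b‖ * ‖α‖ := by
    have h1 : ‖a * β‖ ≤ ‖a * β - b * α‖ + ‖b * α‖ := by
      calc ‖a * β‖ = ‖(a * β - b * α) + b * α‖ := by ring_nf
      _ ≤ _ := norm_add_le _ _
    rwa [norm_mul, norm_mul] at h1
  have hNle : Real.sqrt (‖a‖ ^ 2 + ‖b‖ ^ 2)
      ≤ ‖a‖ + ‖b‖ := by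
    have := Real.sqrt_le_sqrt (show ‖a‖ ^ 2 + ‖b‖ ^ 2
        ≤ (‖a‖ + ‖b‖) ^ 2 by nlinarith)
    rwa [Real.sqrt_sq (by positivity)] at this
  obtain ⟨hnbpos, hmain⟩ := aux_real hna0 hnb0 hnα0 hnβ0 hNpos hMpos hNle he0 hch
    (by rw [hkey] at htri; exact htri)
  have hbne : b ≠ 0 := fun hb0 => by simp [hb0] at hnbpos
  refine ⟨hbne, ?_⟩
  have habs : ‖a / b - α / β‖ = ‖a * β - b * α‖ /
      (‖b‖ * ‖β‖) := by
    rw [div_sub_div _ _ hbne hβ, norm_div, norm_mul]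
  rw [habs, hkey, div_le_iff₀ (by positivity),
    show chordalP1 (a, b) (α, β) * (2 * Real.sqrt (‖α‖ ^ 2 + ‖β‖ ^ 2) *
        (‖α‖ + ‖β‖) / ‖β‖ ^ 2) * (‖b‖ * ‖β‖)
      = (chordalP1 (a, b) (α, β) * (2 * Real.sqrt (‖α‖ ^ 2 + ‖β‖ ^ 2) *
        (‖α‖ + ‖β‖)) * (‖b‖ * ‖β‖)) / ‖β‖ ^ 2
      from by ring, le_div_iff₀ (by positivity)]
  nlinarith [hmain]

lemma chordal_nonneg (v w : ℂ × ℂ) : 0 ≤ chordalP1 v w := by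
  unfold chordalP1; positivity

lemma ratio_tendsto {ι : Type*} {l : Filter ι} {a b : ι → ℂ} {α β : ℂ} (hβ : β ≠ 0)
    (hne : ∀ᶠ t in l, ¬(a t = 0 ∧ b t = 0))
    (hc : ∀ ε : ℝ, 0 < ε → ∀ᶠ t in l, chordalP1 (a t, b t) (α, β) < ε) :
    (∀ᶠ t in l, b t ≠ 0) ∧ Tendsto (fun t => a t / b t) l (𝓝 (α / β)) := by
  have hβ0 : 0 < ‖β‖ := norm_pos_iff.mpr hβ
  have hMpos : 0 < Real.sqrt (‖α‖ ^ 2 + ‖β‖ ^ 2) :=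
    Real.sqrt_pos.mpr (by nlinarith [sq_nonneg (‖α‖)])
  set K := 2 * Real.sqrt (‖α‖ ^ 2 + ‖β‖ ^ 2) *
      (‖α‖ + ‖β‖) / ‖β‖ ^ 2 with hK
  have hKpos : 0 < K := by
    rw [hK]; positivity
  have hδpos : 0 < ‖β‖ / (2 * Real.sqrt (‖α‖ ^ 2 + ‖β‖ ^ 2)) := by
    positivity
  constructor
  · filter_upwards [hne, hc _ hδpos] with t h1 h2
    exact (ratio_est hβ h1 h2.le).1
  · rw [Metric.tendsto_nhds]
    intro ε hε
    have hδ'pos : 0 < min (‖β‖ /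
        (2 * Real.sqrt (‖α‖ ^ 2 + ‖β‖ ^ 2))) (ε / (2 * K)) := by
      positivity
    filter_upwards [hne, hc _ hδ'pos] with t h1 h2
    have h3 := ratio_est hβ h1 (le_of_lt (lt_of_lt_of_le h2 (min_le_left _ _)))
    rw [Complex.dist_eq]
    calc ‖a t / b t - α / β‖ ≤ chordalP1 (a t, b t) (α, β) * K := h3.2
    _ < (ε / (2 * K)) * K := by
        exact mul_lt_mul_of_pos_right (lt_of_lt_of_le h2 (min_le_right _ _)) hKpos
    _ ≤ ε := by
        rw [div_mul_eq_mul_div]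
        rw [div_le_iff₀ (by positivity)]
        nlinarith

lemma coeff_top_eq_zero_case {A : Polynomial ℂ} {n : ℕ} (hA : A.natDegree = n)
    (h0 : A.coeff n = 0) : A = 0 := by
  by_contra hne
  exact Polynomial.leadingCoeff_ne_zero.mpr hne (by rwa [Polynomial.leadingCoeff, hA])

lemma no_common_zero {n : ℕ} {A B : Polynomial ℂ} (hcop : IsCoprime A B)
    (hA : A.natDegree ≤ n) (hB : B.natDegree ≤ n)
    (hmax : max A.natDegree B.natDegree = n)
    {v : ℂ × ℂ} (hv : v ≠ 0)
    (hA0 : homEval A n v = 0) (hB0 : homEval B n v = 0) : False := by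
  by_cases h2 : v.2 = 0
  · have hv1 : v.1 ≠ 0 := by
      intro h1; exact hv (Prod.ext h1 h2)
    have hA0' : A.coeff n = 0 := by
      have := hA0
      rw [show v = (v.1, (0:ℂ)) from Prod.ext rfl h2, homEval_inf] at this
      exact (mul_eq_zero.mp this).resolve_right (pow_ne_zero n hv1)
    have hB0' : B.coeff n = 0 := by
      have := hB0
      rw [show v = (v.1, (0:ℂ)) from Prod.ext rfl h2, homEval_inf] at this
      exact (mul_eq_zero.mp this).resolve_right (pow_ne_zero n hv1)
    have hAB : A = 0 ∨ B = 0 := by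
      rcases max_cases A.natDegree B.natDegree with ⟨he, _⟩ | ⟨he, _⟩
      · exact Or.inl (coeff_top_eq_zero_case (he ▸ hmax) hA0')
      · exact Or.inr (coeff_top_eq_zero_case (he ▸ hmax) hB0')
    rcases hAB with rfl | rfl
    · have hu : IsUnit B := isCoprime_zero_left.mp hcop
      have hd0 : B.natDegree = 0 := Polynomial.natDegree_eq_zero_of_isUnit hu
      have hn : n = 0 := by simpa [hd0] using hmax.symm
      have : B = 0 := by
        rw [Polynomial.eq_C_of_natDegree_eq_zero hd0, show B.coeff 0 = 0 from hn ▸ hB0']; simp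
      exact hu.ne_zero this
    · have hu : IsUnit A := isCoprime_zero_right.mp hcop
      have hd0 : A.natDegree = 0 := Polynomial.natDegree_eq_zero_of_isUnit hu
      have hn : n = 0 := by simpa [hd0] using hmax.symm
      have : A = 0 := by
        rw [Polynomial.eq_C_of_natDegree_eq_zero hd0, show A.coeff 0 = 0 from hn ▸ hA0']; simp
      exact hu.ne_zero this
  · -- finite case
    set z := v.1 / v.2 with hz
    have hv1 : v.1 = z * v.2 := (div_mul_cancel₀ v.1 h2).symm
    have hAe : A.eval z = 0 := by
      have := hA0
      rw [show v = (v.1, v.2) from rfl] at this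
      rw [hv1] at this
      rw [homEval_scale hA] at this
      exact (mul_eq_zero.mp this).resolve_left (pow_ne_zero n h2)
    have hBe : B.eval z = 0 := by
      have := hB0
      rw [show v = (v.1, v.2) from rfl, hv1, homEval_scale hB] at this
      exact (mul_eq_zero.mp this).resolve_left (pow_ne_zero n h2)
    obtain ⟨u, w, huw⟩ := hcop
    have := congrArg (Polynomial.eval z) huw
    simp [hAe, hBe] at this

lemma R_ne_zero {d : ℕ} (hd : 1 < d) {h : ℂ} {A B : Polynomial ℂ} (hABcop : IsCoprime A B)
    (hABdeg : max A.natDegree B.natDegree = d - 1) : A - C h * B ≠ 0 := by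
  intro hR
  have hA : A = C h * B := sub_eq_zero.mp hR
  obtain ⟨u, w, huw⟩ := hABcop
  have hu : IsUnit B := IsUnit.of_mul_eq_one (u * C h + w) (by rw [← huw, hA]; ring)
  have hB0 : B.natDegree = 0 := Polynomial.natDegree_eq_zero_of_isUnit hu
  have hA0 : A.natDegree ≤ 0 := by
    rw [hA]
    exact le_trans (Polynomial.natDegree_C_mul_le h B) (le_of_eq hB0)
  have : d - 1 = 0 := by
    rw [← hABdeg, hB0]
    simpa using hA0
  omega

lemma B_ne_zero {d : ℕ} (hd : 1 < d) {A B : Polynomial ℂ} (hABcop : IsCoprime A B)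
    (hABdeg : max A.natDegree B.natDegree = d - 1) : B ≠ 0 := by
  intro hB
  rw [hB] at hABcop
  have hu : IsUnit A := isCoprime_zero_right.mp hABcop
  have hA0 : A.natDegree = 0 := Polynomial.natDegree_eq_zero_of_isUnit hu
  rw [hB] at hABdeg
  simp [hA0] at hABdeg
  omega

lemma no_bad_lemma
    (d : ℕ) (hd : 1 < d) (h : ℂ)
    (A B : Polynomial ℂ) (hABcop : IsCoprime A B)
    (hABdeg : max A.natDegree B.natDegree = d - 1)
    (P Q : ℂ → Polynomial ℂ) (p c : ℂ → ℂ)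
    (h_deg : ∀ t ∈ Metric.ball (0 : ℂ) 1 \ {0},
      IsCoprime (P t) (Q t) ∧ max (P t).natDegree (Q t).natDegree = d)
    (h_super : ∀ t ∈ Metric.ball (0 : ℂ) 1 \ {0},
      c t ≠ 0 ∧ P t - C (p t) * Q t = C (c t) * (X - C (p t)) ^ d)
    (h_conv : ∀ K : Set (ℂ × ℂ), IsCompact K →
      (∀ v ∈ K, v ≠ ((0 : ℂ), (0 : ℂ)) ∧ v.1 ≠ h * v.2) →
      ∀ ε : ℝ, 0 < ε → ∀ᶠ t in 𝓝[Metric.ball (0 : ℂ) 1 \ {0}] (0 : ℂ), ∀ v ∈ K,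
        chordalP1 (homEval (P t) d v, homEval (Q t) d v)
          (homEval A (d - 1) v, homEval B (d - 1) v) < ε)
    (h_p : Tendsto p (𝓝[Metric.ball (0 : ℂ) 1 \ {0}] (0 : ℂ)) (𝓝 h))
    (v₀ : ℂ × ℂ) (hv0 : v₀ ≠ 0) (hv1 : v₀.1 ≠ h * v₀.2)
    (heq : homEval A (d - 1) v₀ = h * homEval B (d - 1) v₀) : False := by
  classical
  set S := Metric.ball (0 : ℂ) 1 \ {0} with hS
  set l := 𝓝[S] (0 : ℂ) with hl
  -- the filter is nontrivial
  have hS0 : (0 : ℂ) ∈ closure S := by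
    rw [Metric.mem_closure_iff]
    intro ε hε
    refine ⟨((min ε 1) / 2 : ℝ), ⟨?_, ?_⟩, ?_⟩
    · rw [Metric.mem_ball, dist_zero_right]
      rw [Complex.norm_real, Real.norm_eq_abs, abs_of_pos (by positivity)]
      have : min ε 1 ≤ 1 := min_le_right _ _
      linarith
    · simp only [Set.mem_singleton_iff]
      intro h0
      have : ((min ε 1) / 2 : ℝ) = 0 := by exact_mod_cast h0
      have : (0:ℝ) < min ε 1 := lt_min hε one_pos
      linarith
    · rw [dist_comm, dist_zero_right, Complex.norm_real, Real.norm_eq_abs,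
        abs_of_pos (by positivity)]
      have : min ε 1 ≤ ε := min_le_left _ _
      linarith
  haveI hNB : l.NeBot := mem_closure_iff_nhdsWithin_neBot.mp hS0
  have hmem : ∀ᶠ t in l, t ∈ S := eventually_mem_nhdsWithin
  -- degree bounds
  have hAle : A.natDegree ≤ d - 1 := hABdeg ▸ le_max_left _ _
  have hBle : B.natDegree ≤ d - 1 := hABdeg ▸ le_max_right _ _
  set R := A - C h * B with hR
  have hR0 : R ≠ 0 := R_ne_zero hd hABcop hABdeg
  have hB0 : B ≠ 0 := B_ne_zero hd hABcop hABdeg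
  have hBv0 : homEval B (d - 1) v₀ ≠ 0 := by
    intro hz
    exact no_common_zero hABcop hAle hBle hABdeg hv0 (by rw [heq, hz, mul_zero]) hz
  -- general convergence claim
  have conv : ∀ v : ℂ × ℂ, v ≠ 0 → v.1 ≠ h * v.2 → homEval B (d - 1) v ≠ 0 →
      (∀ᶠ t in l, homEval (Q t) d v ≠ 0) ∧
      Tendsto (fun t => homEval (P t) d v / homEval (Q t) d v) l
        (𝓝 (homEval A (d - 1) v / homEval B (d - 1) v)) := by
    intro v hv0' hv1' hBv'
    refine ratio_tendsto hBv' ?_ ?_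
    · filter_upwards [hmem] with t ht
      rintro ⟨h1, h2⟩
      have hPle : (P t).natDegree ≤ d := (h_deg t ht).2 ▸ le_max_left _ _
      have hQle : (Q t).natDegree ≤ d := (h_deg t ht).2 ▸ le_max_right _ _
      exact no_common_zero (h_deg t ht).1 hPle hQle (h_deg t ht).2 hv0' h1 h2
    · intro ε hε
      have := h_conv {v} isCompact_singleton
        (by rintro w rfl; exact ⟨hv0', hv1'⟩) ε hε
      filter_upwards [this] with t ht
      exact ht v rfl
  -- superattracting identity, homogeneous form
  have hsup : ∀ᶠ t in l, ∀ v : ℂ × ℂ,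
      homEval (P t) d v - p t * homEval (Q t) d v = c t * (v.1 - p t * v.2) ^ d := by
    filter_upwards [hmem] with t ht v
    calc homEval (P t) d v - p t * homEval (Q t) d v
        = homEval (P t - C (p t) * Q t) d v := by rw [homEval_sub, homEval_C_mul]
      _ = homEval (C (c t) * (X - C (p t)) ^ d) d v := by rw [(h_super t ht).2]
      _ = c t * (v.1 - p t * v.2) ^ d := by rw [homEval_C_mul, homEval_XsubC_pow]
  have hcne : ∀ᶠ t in l, c t ≠ 0 := by
    filter_upwards [hmem] with t ht; exact (h_super t ht).1
  -- nodes
  have hbadfin : ({h} ∪ {x | R.IsRoot x} ∪ {x | B.IsRoot x}).Finite :=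
    ((Set.finite_singleton h).union (Polynomial.finite_setOf_isRoot hR0)).union
      (Polynomial.finite_setOf_isRoot hB0)
  obtain ⟨tt, htt_sub, htt_card⟩ := hbadfin.infinite_compl.exists_subset_card_eq (d + 1)
  have hnode : ∀ x ∈ tt, x ≠ h ∧ R.eval x ≠ 0 ∧ B.eval x ≠ 0 := by
    intro x hx
    have := htt_sub hx
    simp only [Set.mem_compl_iff, Set.mem_union, Set.mem_singleton_iff, Set.mem_setOf_eq,
      not_or] at this
    exact ⟨this.1.1, this.1.2, this.2⟩
  -- convergence at v₀
  obtain ⟨hQv0, hQv0t⟩ := conv v₀ hv0 hv1 hBv0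
  have hQv0t' : Tendsto (fun t => homEval (P t) d v₀ / homEval (Q t) d v₀) l (𝓝 h) := by
    rwa [heq, mul_div_assoc, div_self hBv0, mul_one] at hQv0t
  have hDv_ne : ∀ᶠ t in l, v₀.1 - p t * v₀.2 ≠ 0 :=
    (tendsto_const_nhds.sub (h_p.mul_const v₀.2)).eventually_ne (sub_ne_zero.mpr hv1)
  -- per-node convergence to zero
  have gx : ∀ x ∈ tt, Tendsto (fun t => homEval (Q t) d (x, 1) / homEval (Q t) d v₀) l (𝓝 0) := by
    intro x hx
    obtain ⟨hxh, hRx, hBx⟩ := hnode x hx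
    have hBx1 : homEval B (d - 1) (x, 1) ≠ 0 := by rw [homEval_eval hBle]; exact hBx
    obtain ⟨hQx, hQxt⟩ := conv (x, 1) (by simp [Prod.ext_iff]) (by simpa using hxh) hBx1
    have hφ : homEval A (d - 1) (x, 1) / homEval B (d - 1) (x, 1) = A.eval x / B.eval x := by
      rw [homEval_eval hAle, homEval_eval hBle]
    have hφh : A.eval x / B.eval x - h ≠ 0 := by
      have : A.eval x / B.eval x - h = R.eval x / B.eval x := by
        rw [hR]; field_simp; simp only [eval_sub, eval_mul, eval_C]; ring
      rw [this]
      exact div_ne_zero hRx hBx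
    have hpx : ∀ᶠ t in l, x - p t ≠ 0 := by
      filter_upwards [h_p.eventually_ne (Ne.symm hxh)] with t ht
      exact sub_ne_zero.mpr (fun hxx => ht hxx.symm)
    -- three factors
    have L1 : Tendsto (fun t => homEval (Q t) d (x, 1) / (c t * (x - p t) ^ d)) l
        (𝓝 (A.eval x / B.eval x - h)⁻¹) := by
      have base : Tendsto (fun t => homEval (P t) d (x, 1) / homEval (Q t) d (x, 1) - p t) l
          (𝓝 (A.eval x / B.eval x - h)) := by
        have := hQxt.sub h_p
        rwa [hφ] at this
      have := base.inv₀ hφh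
      apply this.congr'
      filter_upwards [hsup, hQx, hcne, hpx] with t h1 h2 h3 h4
      have hid : homEval (P t) d (x, 1) - p t * homEval (Q t) d (x, 1)
          = c t * (x - p t) ^ d := by simpa using h1 (x, 1)
      rw [← hid]
      rw [show homEval (P t) d (x, 1) / homEval (Q t) d (x, 1) - p t
          = (homEval (P t) d (x, 1) - p t * homEval (Q t) d (x, 1)) / homEval (Q t) d (x, 1)
          from by field_simp]
      rw [inv_div]
    have L2 : Tendsto (fun t => c t * (v₀.1 - p t * v₀.2) ^ d / homEval (Q t) d v₀) l
        (𝓝 0) := by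
      have base : Tendsto (fun t => homEval (P t) d v₀ / homEval (Q t) d v₀ - p t) l
          (𝓝 (h - h)) := hQv0t'.sub h_p
      rw [sub_self] at base
      apply base.congr'
      filter_upwards [hsup, hQv0] with t h1 h2
      have hid : homEval (P t) d v₀ - p t * homEval (Q t) d v₀
          = c t * (v₀.1 - p t * v₀.2) ^ d := h1 v₀
      rw [← hid]
      field_simp
    have L3 : Tendsto (fun t => (c t * (x - p t) ^ d) / (c t * (v₀.1 - p t * v₀.2) ^ d)) l
        (𝓝 ((x - h) ^ d / (v₀.1 - h * v₀.2) ^ d)) := by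
      have t1 : Tendsto (fun t => (x - p t) ^ d) l (𝓝 ((x - h) ^ d)) :=
        (tendsto_const_nhds.sub h_p).pow d
      have t2 : Tendsto (fun t => (v₀.1 - p t * v₀.2) ^ d) l (𝓝 ((v₀.1 - h * v₀.2) ^ d)) :=
        (tendsto_const_nhds.sub (h_p.mul_const v₀.2)).pow d
      have := t1.div t2 (pow_ne_zero d (sub_ne_zero.mpr hv1))
      apply this.congr'
      filter_upwards [hcne] with t h3
      rw [mul_div_mul_left _ _ h3]
      rfl
    have prod := (L1.mul L2).mul L3
    rw [mul_zero, zero_mul] at prod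
    apply prod.congr'
    filter_upwards [hcne, hpx, hDv_ne, hQv0] with t h3 h4 h5 h6
    have hDx : c t * (x - p t) ^ d ≠ 0 := mul_ne_zero h3 (pow_ne_zero d h4)
    have hDv : c t * (v₀.1 - p t * v₀.2) ^ d ≠ 0 := mul_ne_zero h3 (pow_ne_zero d h5)
    field_simp
  -- Lagrange interpolation identity
  have hμsum : ∀ᶠ t in l, ∑ x ∈ tt,
      (homEval (Q t) d (x, 1) / homEval (Q t) d v₀) *
        homEval (Lagrange.basis tt id x) d v₀ = 1 := by
    filter_upwards [hmem, hQv0] with t ht hQ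
    have hQle : (Q t).natDegree ≤ d := (h_deg t ht).2 ▸ le_max_right _ _
    have hdeg_lt : (Q t).degree < (tt.card : WithBot ℕ) := by
      rw [htt_card]
      exact lt_of_le_of_lt (Polynomial.degree_le_natDegree)
        (by exact_mod_cast Nat.lt_succ_of_le hQle)
    have hlag := Lagrange.eq_interpolate (s := tt) (v := id) (Set.injOn_id _) hdeg_lt
    rw [Lagrange.interpolate_apply] at hlag
    have hhom := congrArg (fun W => homEval W d v₀) hlag
    simp only [homEval_finset_sum, homEval_C_mul, id] at hhom
    have : ∑ x ∈ tt, (homEval (Q t) d (x, 1) / homEval (Q t) d v₀) *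
        homEval (Lagrange.basis tt id x) d v₀
        = (∑ x ∈ tt, (Q t).eval x * homEval (Lagrange.basis tt id x) d v₀) /
          homEval (Q t) d v₀ := by
      rw [Finset.sum_div]
      refine Finset.sum_congr rfl fun x hx => ?_
      rw [homEval_eval hQle]
      ring
    rw [this, ← hhom, div_self hQ]
  -- sum tends to zero
  have hsum0 : Tendsto (fun t => ∑ x ∈ tt,
      (homEval (Q t) d (x, 1) / homEval (Q t) d v₀) *
        homEval (Lagrange.basis tt id x) d v₀) l (𝓝 0) := by
    have := tendsto_finset_sum tt (fun x hx => (gx x hx).mul_const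
      (homEval (Lagrange.basis tt id x) d v₀))
    simpa using this
  have hsum1 : Tendsto (fun t => ∑ x ∈ tt,
      (homEval (Q t) d (x, 1) / homEval (Q t) d v₀) *
        homEval (Lagrange.basis tt id x) d v₀) l (𝓝 1) :=
    Tendsto.congr' (by filter_upwards [hμsum] with t ht; exact ht.symm) tendsto_const_nhds
  exact zero_ne_one (tendsto_nhds_unique hsum0 hsum1)

/-- Let `f_t = P_t/Q_t` be a holomorphic family of rational maps of degree
`d > 1` on `ℙ¹`, parameterized by the punctured disk, such that each `f_t` is Möbius conjugate
to a polynomial — encoded by a totally ramified (superattracting) fixed point `p t`, i.e.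
`P_t − p_t Q_t = c_t (X − p_t)^d` — suppose `f_t → φ = A/B` of degree `d − 1` locally
uniformly on `ℙ¹ \ {h}` (in the chordal metric, via homogeneous coordinates), and suppose
`p_t → h`.  Then the limit map `φ` satisfies `φ⁻¹(h) = {h}`, i.e.
`A − h·B = c₀·(X − h)^{d−1}` for some `c₀ ≠ 0`. -/
theorem degenerating_escape_rate_stmt15
    (d : ℕ) (hd : 1 < d) (h : ℂ)
    (A B : Polynomial ℂ) (hABcop : IsCoprime A B)
    (hABdeg : max A.natDegree B.natDegree = d - 1)
    (P Q : ℂ → Polynomial ℂ) (p c : ℂ → ℂ)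
    (h_hol : ∀ i : ℕ,
      DifferentiableOn ℂ (fun t => (P t).coeff i) (Metric.ball (0 : ℂ) 1 \ {0}) ∧
      DifferentiableOn ℂ (fun t => (Q t).coeff i) (Metric.ball (0 : ℂ) 1 \ {0}))
    (h_deg : ∀ t ∈ Metric.ball (0 : ℂ) 1 \ {0},
      IsCoprime (P t) (Q t) ∧ max (P t).natDegree (Q t).natDegree = d)
    (h_super : ∀ t ∈ Metric.ball (0 : ℂ) 1 \ {0},
      c t ≠ 0 ∧ P t - C (p t) * Q t = C (c t) * (X - C (p t)) ^ d)
    (h_conv : ∀ K : Set (ℂ × ℂ), IsCompact K →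
      (∀ v ∈ K, v ≠ ((0 : ℂ), (0 : ℂ)) ∧ v.1 ≠ h * v.2) →
      ∀ ε : ℝ, 0 < ε → ∀ᶠ t in 𝓝[Metric.ball (0 : ℂ) 1 \ {0}] (0 : ℂ), ∀ v ∈ K,
        chordalP1 (homEval (P t) d v, homEval (Q t) d v)
          (homEval A (d - 1) v, homEval B (d - 1) v) < ε)
    (h_p : Tendsto p (𝓝[Metric.ball (0 : ℂ) 1 \ {0}] (0 : ℂ)) (𝓝 h)) :
    ∃ c0 : ℂ, c0 ≠ 0 ∧ A - C h * B = C c0 * (X - C h) ^ (d - 1) := by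
  have no_bad : ∀ v₀ : ℂ × ℂ, v₀ ≠ 0 → v₀.1 ≠ h * v₀.2 →
      homEval A (d - 1) v₀ = h * homEval B (d - 1) v₀ → False := fun v₀ hv0 hv1 heq =>
    no_bad_lemma d hd h A B hABcop hABdeg P Q p c h_deg h_super h_conv h_p v₀ hv0 hv1 heq
  have hAle : A.natDegree ≤ d - 1 := hABdeg ▸ le_max_left _ _
  have hBle : B.natDegree ≤ d - 1 := hABdeg ▸ le_max_right _ _
  set R := A - C h * B with hR
  have hR0 : R ≠ 0 := R_ne_zero hd hABcop hABdeg
  have hcoeff : R.coeff (d - 1) ≠ 0 := by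
    intro h0
    apply no_bad (1, 0) (by simp [Prod.ext_iff]) (by simp)
    rw [homEval_inf, homEval_inf]
    have hc : R.coeff (d - 1) = A.coeff (d - 1) - h * B.coeff (d - 1) := by
      rw [hR, Polynomial.coeff_sub, Polynomial.coeff_C_mul]
    rw [hc] at h0
    simp only [one_pow, mul_one]
    linear_combination h0
  have hdegR : R.natDegree = d - 1 := by
    apply le_antisymm
    · exact le_trans (Polynomial.natDegree_sub_le A (C h * B))
        (max_le hAle (le_trans (Polynomial.natDegree_C_mul_le h B) hBle))
    · exact Polynomial.le_natDegree_of_ne_zero hcoeff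
  have hroots_mem : ∀ z ∈ R.roots, z = h := by
    intro z hz
    by_contra hzh
    have hz0 : R.eval z = 0 := (Polynomial.mem_roots'.mp hz).2
    apply no_bad (z, 1) (by simp [Prod.ext_iff]) (by simpa using hzh)
    rw [homEval_eval hAle, homEval_eval hBle]
    have he : A.eval z - h * B.eval z = 0 := by
      rw [hR] at hz0; simpa using hz0
    linear_combination he
  have hcard : Multiset.card R.roots = d - 1 := by
    rw [← hdegR]
    exact Polynomial.splits_iff_card_roots.mp (IsAlgClosed.splits R)
  have hroots : R.roots = Multiset.replicate (d - 1) h :=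
    Multiset.eq_replicate.mpr ⟨hcard, hroots_mem⟩
  refine ⟨R.leadingCoeff, Polynomial.leadingCoeff_ne_zero.mpr hR0, ?_⟩
  have hmul := Polynomial.C_leadingCoeff_mul_prod_multiset_X_sub_C
    (p := R) (hcard.trans hdegR.symm)
  rw [hroots, Multiset.map_replicate, Multiset.prod_replicate] at hmul
  exact hmul.symm
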